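/- arXiv:2306.11154 — 4 statements merged into one kernel-verified Lean document; each statement's English description precedes it below -/
import Mathlib

section
/- For any vectors a, b in R^n, let a+ and b+ denote their coordinate rearrangements in descending order. Then for any permutation ρ of {1,...,n}, the vector a+ + b+ majorizes the vector a+ + ρ∘b+ (where ρ∘b+ permutes the coordinates of b+). -/
open Finset

/-- A vector is sorted in descending order. -/
def DescSorted {n : ℕ} (a : Fin n → ℝ) : Prop :=
  ∀ i j : Fin n, i ≤ j → a j ≤ a i

/-- `b` is a descending rearrangement of `a`. -/
def DescSortOf {n : ℕ} (a b : Fin n → ℝ) : Prop :=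
  (∃ σ : Equiv.Perm (Fin n), ∀ i, b i = a (σ i)) ∧ DescSorted b

/-- Partial sum of the first `k` coordinates. -/
def psum {n : ℕ} (a : Fin n → ℝ) (k : ℕ) : ℝ :=
  ∑ i ∈ Finset.univ.filter (fun i : Fin n => (i : ℕ) < k), a i

/-- `a` majorizes `b`: after sorting both in descending order, all partial sums of `a`
dominate those of `b` for `k < n`, and the total sums agree. -/
def Majorizes {n : ℕ} (a b : Fin n → ℝ) : Prop :=
  ∀ a' b' : Fin n → ℝ, DescSortOf a a' → DescSortOf b b' →
    (∀ k : ℕ, k < n → psum b' k ≤ psum a' k) ∧ (∑ i, a' i = ∑ i, b' i)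

/-- Uniqueness of descending sorts: a descending rearrangement of a descending
vector is that vector itself. -/
lemma descSort_unique {n : ℕ} {c a' : Fin n → ℝ} (hc : DescSorted c)
    (h : DescSortOf c a') : a' = c := by
  obtain ⟨⟨σ, hσ⟩, hsort⟩ := h
  have h1 : Monotone ((fun i => -c i) ∘ σ) := by
    intro i j hij
    simp only [Function.comp, neg_le_neg_iff]
    rw [← hσ, ← hσ]; exact hsort i j hij
  have h2 : Monotone ((fun i => -c i) ∘ (1 : Equiv.Perm (Fin n))) := by
    intro i j hij
    simp only [Function.comp, Equiv.Perm.one_apply, neg_le_neg_iff]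
    exact hc i j hij
  have := Tuple.unique_monotone h1 h2
  funext i
  have := congrFun this i
  simp only [Function.comp, Equiv.Perm.one_apply, neg_inj] at this
  rw [hσ, this]

/-- Top-k partial sum of a descending vector dominates any k-element subset sum. -/
lemma sum_le_psum {n : ℕ} {a : Fin n → ℝ} (ha : DescSorted a) (S : Finset (Fin n))
    {k : ℕ} (hk : k ≤ n) (hS : S.card = k) : ∑ i ∈ S, a i ≤ psum a k := by
  classical
  set L : Finset (Fin n) := Finset.univ.filter (fun i : Fin n => (i : ℕ) < k) with hL
  have hLcard : L.card = k := by
    rw [hL, Finset.card_filter,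
      Fin.sum_univ_eq_sum_range (fun i => if i < k then 1 else 0), ← Finset.card_filter]
    have : Finset.filter (fun x => x < k) (Finset.range n) = Finset.range k := by
      ext x; simp; omega
    rw [this, Finset.card_range]
  have key : ∑ i ∈ S \ L, a i ≤ ∑ i ∈ L \ S, a i := by
    have hcards : (S \ L).card = (L \ S).card := by
      rw [Finset.card_sdiff_comm (hS.trans hLcard.symm)]
    rcases Finset.eq_empty_or_nonempty (S \ L) with he | ⟨x, hx⟩
    · have hLS : L \ S = ∅ := Finset.card_eq_zero.mp (by rw [← hcards, he]; simp)
      rw [he, hLS]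
    · have hkn : k < n := by
        have hx' := Finset.mem_sdiff.mp hx
        have h1 : ¬ ((x : ℕ) < k) := by
          intro h
          exact hx'.2 (Finset.mem_filter.mpr ⟨Finset.mem_univ _, h⟩)
        have h2 := x.2
        omega
      calc ∑ i ∈ S \ L, a i ≤ (S \ L).card • a ⟨k, hkn⟩ := by
            refine Finset.sum_le_card_nsmul _ _ _ (fun i hi => ?_)
            refine ha ⟨k, hkn⟩ i ?_
            have := (Finset.mem_sdiff.mp hi).2
            simp [hL, Fin.le_def] at this ⊢
            omega
        _ = (L \ S).card • a ⟨k, hkn⟩ := by rw [hcards]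
        _ ≤ ∑ i ∈ L \ S, a i := by
            refine Finset.card_nsmul_le_sum _ _ _ (fun i hi => ?_)
            refine ha i ⟨k, hkn⟩ ?_
            have := (Finset.mem_sdiff.mp hi).1
            simp [hL, Fin.le_def] at this ⊢
            omega
  have : ∑ i ∈ S, a i = ∑ i ∈ S ∩ L, a i + ∑ i ∈ S \ L, a i := by
    rw [Finset.sum_inter_add_sum_sdiff]
  rw [this]
  have : psum a k = ∑ i ∈ L ∩ S, a i + ∑ i ∈ L \ S, a i := by
    rw [Finset.sum_inter_add_sum_sdiff]; rfl
  rw [this, Finset.inter_comm]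
  linarith

/-- for descending rearrangements `a⁺`, `b⁺` of `a`, `b`, and any
permutation `ρ`, the vector `a⁺ + b⁺` majorizes `a⁺ + ρ∘b⁺`. -/
theorem stmt0 {n : ℕ} (a b ap bp : Fin n → ℝ)
    (hap : DescSortOf a ap) (hbp : DescSortOf b bp) (ρ : Equiv.Perm (Fin n)) :
    Majorizes (fun i => ap i + bp i) (fun i => ap i + bp (ρ i)) := by
  classical
  obtain ⟨_, hapd⟩ := hap
  obtain ⟨_, hbpd⟩ := hbp
  intro a' b' ha' hb'
  have hc : DescSorted (fun i => ap i + bp i) :=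
    fun i j h => add_le_add (hapd i j h) (hbpd i j h)
  have ha'eq : a' = fun i => ap i + bp i := descSort_unique hc ha'
  obtain ⟨⟨σ, hσ⟩, hbs⟩ := hb'
  constructor
  · intro k hkn
    have hkn' : k ≤ n := le_of_lt hkn
    set L : Finset (Fin n) := Finset.univ.filter (fun i : Fin n => (i : ℕ) < k) with hL
    have hLcard : L.card = k := by
      rw [hL, Finset.card_filter,
        Fin.sum_univ_eq_sum_range (fun i => if i < k then 1 else 0), ← Finset.card_filter]
      have : Finset.filter (fun x => x < k) (Finset.range n) = Finset.range k := by
        ext x; simp; omega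
      rw [this, Finset.card_range]
    have hb'sum : psum b' k = ∑ i ∈ L, ap (σ i) + ∑ i ∈ L, bp (ρ (σ i)) := by
      rw [psum, ← Finset.sum_add_distrib]
      exact Finset.sum_congr rfl (fun i _ => hσ i)
    have h1 : ∑ i ∈ L, ap (σ i) ≤ psum ap k := by
      rw [← Finset.sum_image (fun i _ j _ h => σ.injective h)]
      exact sum_le_psum hapd _ hkn' (by rw [Finset.card_image_of_injective _ σ.injective, hLcard])
    have h2 : ∑ i ∈ L, bp (ρ (σ i)) ≤ psum bp k := by
      have hinj : Function.Injective (fun i => ρ (σ i)) :=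
        fun i j h => σ.injective (ρ.injective h)
      rw [← Finset.sum_image (fun i _ j _ h => hinj h)]
      exact sum_le_psum hbpd _ hkn' (by rw [Finset.card_image_of_injective _ hinj, hLcard])
    have hasum : psum a' k = psum ap k + psum bp k := by
      rw [ha'eq, psum, psum, psum, ← Finset.sum_add_distrib]
    rw [hasum, hb'sum]
    exact add_le_add h1 h2
  · rw [ha'eq]
    have : ∑ i, b' i = ∑ i, (ap (σ i) + bp ((σ.trans ρ) i)) :=
      Finset.sum_congr rfl (fun i _ => hσ i)
    rw [this, Finset.sum_add_distrib, Finset.sum_add_distrib,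
      Equiv.sum_comp σ ap, Equiv.sum_comp (σ.trans ρ) bp]
end

section
/- (Hardy–Littlewood–Pólya) For vectors a, b in R^n, the inequality ∑_{i=1}^n h(a_i) ≥ ∑_{i=1}^n h(b_i) holds for all convex functions h: R → R if and only if a majorizes b. -/
open Finset

private lemma slope_swap (h : ℝ → ℝ) (x y : ℝ) :
    (h y - h x) / (y - x) = (h x - h y) / (x - y) := by
  rw [← neg_div_neg_eq]; ring_nf

private lemma slope4' {h : ℝ → ℝ} (hh : ConvexOn ℝ Set.univ h) {x y x' y' : ℝ}
    (hxy : x < y) (hxy' : x' < y') (hx : x ≤ x') (hy : y ≤ y') :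
    (h y - h x) / (y - x) ≤ (h y' - h x') / (y' - x') := by
  have hxy2 : x < y' := lt_of_lt_of_le hxy hy
  have step1 : (h y - h x) / (y - x) ≤ (h y' - h x) / (y' - x) :=
    hh.secant_mono (Set.mem_univ x) (Set.mem_univ y) (Set.mem_univ y') hxy.ne' hxy2.ne' hy
  have step2 : (h x - h y') / (x - y') ≤ (h x' - h y') / (x' - y') :=
    hh.secant_mono (Set.mem_univ y') (Set.mem_univ x) (Set.mem_univ x') hxy2.ne hxy'.ne hx
  calc (h y - h x) / (y - x) ≤ (h y' - h x) / (y' - x) := step1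
    _ = (h x - h y') / (x - y') := slope_swap h x y'
    _ ≤ (h x' - h y') / (x' - y') := step2
    _ = (h y' - h x') / (y' - x') := (slope_swap h x' y').symm

private lemma slope4 {h : ℝ → ℝ} (hh : ConvexOn ℝ Set.univ h) {x y x' y' : ℝ}
    (hx : x ≤ x') (hy : y ≤ y') (h1 : x ≠ y) (h2 : x' ≠ y') :
    (h y - h x) / (y - x) ≤ (h y' - h x') / (y' - x') := by
  rcases lt_or_gt_of_ne h1 with h1 | h1 <;> rcases lt_or_gt_of_ne h2 with h2 | h2
  · exact slope4' hh h1 h2 hx hy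
  · rw [slope_swap h x' y']
    exact slope4' hh h1 h2 (h1.le.trans hy) (hy.trans h2.le)
  · rw [slope_swap h x y]
    exact slope4' hh h1 h2 (h1.le.trans hx) (hx.trans h2.le)
  · rw [slope_swap h x y, slope_swap h x' y']
    exact slope4' hh h1 h2 hy hx

private lemma psum_eq {n : ℕ} (a : Fin n → ℝ) (f : ℕ → ℝ) (hf : ∀ i : Fin n, f i.val = a i)
    {k : ℕ} (hk : k ≤ n) : psum a k = ∑ i ∈ range k, f i := by
  have h1 : psum a k = ∑ i : Fin n, (fun j : ℕ => if j < k then f j else 0) i.val := by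
    rw [psum, Finset.sum_filter]
    refine Finset.sum_congr rfl fun i _ => ?_
    by_cases hik : (i : ℕ) < k <;> simp [hik, hf i]
  rw [h1, Fin.sum_univ_eq_sum_range (fun j : ℕ => if j < k then f j else 0) n]
  rw [← Finset.sum_filter]
  congr 1
  ext j
  simp only [Finset.mem_filter, Finset.mem_range]
  omega

private lemma sorted_key {n : ℕ} (a' b' : Fin n → ℝ) (hda : DescSorted a') (hdb : DescSorted b')
    (hps : ∀ k : ℕ, k < n → psum b' k ≤ psum a' k) (hsum : ∑ i, a' i = ∑ i, b' i)
    (h : ℝ → ℝ) (hh : ConvexOn ℝ Set.univ h) :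
    ∑ i, h (b' i) ≤ ∑ i, h (a' i) := by
  classical
  rcases Nat.eq_zero_or_pos n with hn | hn
  · subst hn; simp
  set α : ℕ → ℝ := fun k => a' ⟨min k (n-1), by omega⟩ with hα
  set β : ℕ → ℝ := fun k => b' ⟨min k (n-1), by omega⟩ with hβ
  have hαa : ∀ i : Fin n, α i.val = a' i := by
    intro i
    have : (⟨min i.val (n-1), by omega⟩ : Fin n) = i := Fin.ext (by simp; omega)
    rw [hα]; simp only; rw [this]
  have hβb : ∀ i : Fin n, β i.val = b' i := by
    intro i
    have : (⟨min i.val (n-1), by omega⟩ : Fin n) = i := Fin.ext (by simp; omega)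
    rw [hβ]; simp only; rw [this]
  have hαm : ∀ i j : ℕ, i ≤ j → α j ≤ α i := by
    intro i j hij
    exact hda _ _ (by rw [Fin.mk_le_mk]; omega)
  have hβm : ∀ i j : ℕ, i ≤ j → β j ≤ β i := by
    intro i j hij
    exact hdb _ _ (by rw [Fin.mk_le_mk]; omega)
  set d : ℕ → ℝ := fun i => α i - β i with hd
  -- partial sums of d
  have hD : ∀ k : ℕ, k ≤ n → ∑ i ∈ range k, d i = psum a' k - psum b' k := by
    intro k hk
    rw [psum_eq a' α hαa hk, psum_eq b' β hβb hk, ← Finset.sum_sub_distrib]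
  have hDnn : ∀ k : ℕ, k < n → 0 ≤ ∑ i ∈ range k, d i := by
    intro k hk
    rw [hD k hk.le]
    have := hps k hk
    linarith
  have hDn : ∑ i ∈ range n, d i = 0 := by
    rw [hD n le_rfl]
    have ea : psum a' n = ∑ i, a' i := by
      rw [psum]
      congr 1
      refine Finset.filter_true_of_mem fun i _ => i.isLt
    have eb : psum b' n = ∑ i, b' i := by
      rw [psum]
      congr 1
      refine Finset.filter_true_of_mem fun i _ => i.isLt
    rw [ea, eb, hsum]; ring
  set J : Finset ℕ := (range n).filter (fun i => α i ≠ β i) with hJ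
  by_cases hJne : J.Nonempty
  swap
  · -- all equal
    refine le_of_eq (Finset.sum_congr rfl fun i _ => ?_)
    have hiJ : i.val ∉ J := fun hmem => hJne ⟨i.val, hmem⟩
    rw [hJ, Finset.mem_filter] at hiJ
    push_neg at hiJ
    have := hiJ (Finset.mem_range.mpr i.isLt)
    rw [← hβb i, ← hαa i, this]
  · set j0 : ℕ := J.min' hJne with hj0
    set s : ℕ → ℝ := fun k => (h (α k) - h (β k)) / (α k - β k) with hs
    have hsmono : ∀ p ∈ J, ∀ q ∈ J, p ≤ q → s q ≤ s p := by
      intro p hp q hq hpq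
      rw [hJ, Finset.mem_filter] at hp hq
      exact slope4 hh (hβm p q hpq) (hαm p q hpq) (Ne.symm hq.2) (Ne.symm hp.2)
    set c : ℕ → ℝ := fun i =>
      if hne : (J.filter (· ≤ i)).Nonempty then s ((J.filter (· ≤ i)).max' hne) else s j0
      with hc
    have hcmono : ∀ i j : ℕ, i ≤ j → c j ≤ c i := by
      intro i j hij
      have hsub : J.filter (· ≤ i) ⊆ J.filter (· ≤ j) :=
        Finset.monotone_filter_right J (fun x _ hx => le_trans hx hij)
      by_cases hi : (J.filter (· ≤ i)).Nonempty
      · have hjne : (J.filter (· ≤ j)).Nonempty := hi.mono hsub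
        rw [hc]
        simp only
        rw [dif_pos hi, dif_pos hjne]
        have hmax : (J.filter (· ≤ i)).max' hi ≤ (J.filter (· ≤ j)).max' hjne :=
          Finset.max'_subset hi hsub
        exact hsmono _ (Finset.mem_filter.mp (Finset.max'_mem _ hi)).1
          _ (Finset.mem_filter.mp (Finset.max'_mem _ hjne)).1 hmax
      · by_cases hjne : (J.filter (· ≤ j)).Nonempty
        · rw [hc]
          simp only
          rw [dif_neg hi, dif_pos hjne]
          have hmem : (J.filter (· ≤ j)).max' hjne ∈ J :=
            (Finset.mem_filter.mp (Finset.max'_mem _ hjne)).1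
          exact hsmono j0 (Finset.min'_mem J hJne) _ hmem (Finset.min'_le J _ hmem)
        · rw [hc]
          simp only
          rw [dif_neg hi, dif_neg hjne]
    have hkey : ∀ i ∈ range n, h (α i) - h (β i) = c i * d i := by
      intro i _hi
      by_cases hab : α i = β i
      · have hd0 : d i = 0 := by rw [hd]; simp [hab]
        rw [hd0, mul_zero, hab, sub_self]
      · have hiJ : i ∈ J := by
          rw [hJ, Finset.mem_filter]
          exact ⟨Finset.mem_range.mpr (Finset.mem_range.mp _hi), hab⟩
        have hiF : i ∈ J.filter (· ≤ i) := Finset.mem_filter.mpr ⟨hiJ, le_refl i⟩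
        have hFne : (J.filter (· ≤ i)).Nonempty := ⟨i, hiF⟩
        have hmax : (J.filter (· ≤ i)).max' hFne = i := by
          refine le_antisymm (Finset.max'_le _ _ _ fun x hx => (Finset.mem_filter.mp hx).2)
            (Finset.le_max' _ i hiF)
        have hci : c i = s i := by
          rw [hc]; simp only; rw [dif_pos hFne, hmax]
        rw [hci, hs, hd]
        simp only
        rw [div_mul_cancel₀ _ (sub_ne_zero.mpr hab)]
    have main : 0 ≤ ∑ i ∈ range n, c i * d i := by
      have habel := Finset.sum_range_by_parts c d n
      simp only [smul_eq_mul] at habel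
      rw [habel, hDn, mul_zero, zero_sub]
      have hS : ∑ i ∈ range (n-1), (c (i+1) - c i) * (∑ j ∈ range (i+1), d j) ≤ 0 := by
        refine Finset.sum_nonpos fun i hi => ?_
        have hin : i + 1 < n := by
          have := Finset.mem_range.mp hi; omega
        exact mul_nonpos_iff.mpr (Or.inr
          ⟨sub_nonpos.mpr (hcmono i (i+1) (by omega)), hDnn (i+1) hin⟩)
      linarith
    have final : ∑ i, h (a' i) - ∑ i, h (b' i) = ∑ i ∈ range n, c i * d i := by
      rw [← Finset.sum_sub_distrib]
      have e1 : ∀ i : Fin n, h (a' i) - h (b' i)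
          = (fun j : ℕ => h (α j) - h (β j)) i.val := by
        intro i; simp only; rw [hαa i, hβb i]
      rw [Finset.sum_congr rfl (fun i _ => e1 i),
        Fin.sum_univ_eq_sum_range (fun j : ℕ => h (α j) - h (β j)) n]
      exact Finset.sum_congr rfl hkey
    linarith

/-- Hardy–Littlewood–Pólya: `∑ h(a i) ≥ ∑ h(b i)` holds for all convex
functions `h : ℝ → ℝ` if and only if `a` majorizes `b`. -/
theorem stmt2 {n : ℕ} (a b : Fin n → ℝ) :
    (∀ h : ℝ → ℝ, ConvexOn ℝ Set.univ h → ∑ i, h (b i) ≤ ∑ i, h (a i)) ↔ Majorizes a b := by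
  constructor
  · intro H
    rintro a' b' ⟨⟨σa, hσa⟩, hda⟩ ⟨⟨σb, hσb⟩, hdb⟩
    have hsuma : ∀ g : ℝ → ℝ, ∑ i, g (a' i) = ∑ i, g (a i) := by
      intro g
      simp only [hσa]
      exact Equiv.sum_comp σa (fun i => g (a i))
    have hsumb : ∀ g : ℝ → ℝ, ∑ i, g (b' i) = ∑ i, g (b i) := by
      intro g
      simp only [hσb]
      exact Equiv.sum_comp σb (fun i => g (b i))
    have hid : ConvexOn ℝ Set.univ (fun x : ℝ => x) := convexOn_id convex_univ
    have hneg : ConvexOn ℝ Set.univ (fun x : ℝ => -x) := by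
      refine ⟨convex_univ, fun x _ y _ p q _ _ _ => le_of_eq ?_⟩
      simp [smul_eq_mul]; ring
    constructor
    · intro k hk
      match k with
      | 0 => simp [psum]
      | (m+1) =>
        have hm : m < n := by omega
        set t : ℝ := a' ⟨m, hm⟩ with ht
        have hconv : ConvexOn ℝ Set.univ (fun x : ℝ => max (x - t) 0) := by
          have hsub : ConvexOn ℝ Set.univ (fun x : ℝ => x - t) := by
            have hc : ConcaveOn ℝ Set.univ (fun _ : ℝ => t) := concaveOn_const t convex_univ
            have := (convexOn_id (convex_univ : Convex ℝ (Set.univ : Set ℝ))).sub hc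
            simpa [Pi.sub_def] using this
          have hz : ConvexOn ℝ Set.univ (fun _ : ℝ => (0:ℝ)) := convexOn_const 0 convex_univ
          have := hsub.sup hz
          simpa [Pi.sup_def] using this
        have key : ∑ i, max (b' i - t) 0 ≤ ∑ i, max (a' i - t) 0 := by
          rw [hsuma (fun x => max (x - t) 0), hsumb (fun x => max (x - t) 0)]
          exact H _ hconv
        set F := Finset.univ.filter (fun i : Fin n => (i : ℕ) < m + 1) with hF
        have hA : ∑ i, max (a' i - t) 0 = ∑ i ∈ F, (a' i - t) := by
          rw [← Finset.sum_filter_add_sum_filter_not univ (fun i : Fin n => (i : ℕ) < m + 1)]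
          have e1 : ∀ i ∈ F, max (a' i - t) 0 = a' i - t := by
            intro i hi
            simp only [hF, Finset.mem_filter] at hi
            have : (i : Fin n) ≤ ⟨m, hm⟩ := by
              rw [Fin.le_def]; simpa using Nat.lt_succ_iff.mp hi.2
            have := hda i ⟨m, hm⟩ this
            rw [max_eq_left]; linarith
          have e2 : ∀ i ∈ Finset.univ.filter (fun i : Fin n => ¬ ((i : ℕ) < m + 1)),
              max (a' i - t) 0 = 0 := by
            intro i hi
            simp only [Finset.mem_filter] at hi
            have : (⟨m, hm⟩ : Fin n) ≤ i := by
              rw [Fin.le_def]; simp; omega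
            have := hda ⟨m, hm⟩ i this
            rw [max_eq_right]; linarith
          rw [Finset.sum_congr rfl e1, Finset.sum_congr rfl e2]
          simp
        have hB : ∑ i ∈ F, (b' i - t) ≤ ∑ i, max (b' i - t) 0 := by
          calc ∑ i ∈ F, (b' i - t) ≤ ∑ i ∈ F, max (b' i - t) 0 :=
                Finset.sum_le_sum (fun i _ => le_max_left _ _)
            _ ≤ ∑ i, max (b' i - t) 0 :=
                Finset.sum_le_sum_of_subset_of_nonneg (Finset.subset_univ F)
                  (fun i _ _ => le_max_right _ _)
        have hchain : ∑ i ∈ F, (b' i - t) ≤ ∑ i ∈ F, (a' i - t) := by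
          calc ∑ i ∈ F, (b' i - t) ≤ ∑ i, max (b' i - t) 0 := hB
            _ ≤ ∑ i, max (a' i - t) 0 := key
            _ = ∑ i ∈ F, (a' i - t) := hA
        have : psum b' (m+1) = ∑ i ∈ F, b' i := rfl
        rw [Finset.sum_sub_distrib, Finset.sum_sub_distrib] at hchain
        show psum b' (m+1) ≤ psum a' (m+1)
        unfold psum
        rw [← hF]
        linarith
    · have h1 := H _ hid
      have h2 := H _ hneg
      simp only [Finset.sum_neg_distrib] at h2
      rw [hsuma (fun x => x), hsumb (fun x => x)]
      linarith
  · intro hM h hh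
    set σa := Tuple.sort (fun i => -a i) with hσa
    set σb := Tuple.sort (fun i => -b i) with hσb
    set a' : Fin n → ℝ := fun i => a (σa i) with ha'
    set b' : Fin n → ℝ := fun i => b (σb i) with hb'
    have hda : DescSorted a' := by
      intro i j hij
      have := Tuple.monotone_sort (fun i => -a i) hij
      simp only [Function.comp_apply] at this
      rw [ha']
      simp only
      linarith
    have hdb : DescSorted b' := by
      intro i j hij
      have := Tuple.monotone_sort (fun i => -b i) hij
      simp only [Function.comp_apply] at this
      rw [hb']
      simp only
      linarith
    obtain ⟨hps, hsum⟩ := hM a' b' ⟨⟨σa, fun i => rfl⟩, hda⟩ ⟨⟨σb, fun i => rfl⟩, hdb⟩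
    have key := sorted_key a' b' hda hdb hps hsum h hh
    calc ∑ i, h (b i) = ∑ i, h (b' i) := (Equiv.sum_comp σb fun i => h (b i)).symm
      _ ≤ ∑ i, h (a' i) := key
      _ = ∑ i, h (a i) := Equiv.sum_comp σa fun i => h (a i)
end

section
/- Let z ∈ R^n, let R ∈ R^n satisfy R_1 ≥ R_2 ≥ ... ≥ R_n, let π be any permutation of [n], and let x^+ denote the isotonic projection of x onto the cone {a : a_1 ≥ a_2 ≥ ... ≥ a_n} (i.e., the Euclidean projection). Then (R + π∘z)^+ majorizes (π∘R + π∘z)^+. -/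
open Finset

/-- `xp` is the Euclidean (isotonic) projection of `x` onto the descending cone
`{a : a 1 ≥ a 2 ≥ ... ≥ a n}`. -/
def IsIsoProj {n : ℕ} (x xp : Fin n → ℝ) : Prop :=
  DescSorted xp ∧
    ∀ a : Fin n → ℝ, DescSorted a → ∑ i, (x i - xp i) ^ 2 ≤ ∑ i, (x i - a i) ^ 2

-- L1: uniqueness of sorted rearrangement
lemma descSortOf_eq {n : ℕ} {a b : Fin n → ℝ} (ha : DescSorted a) (h : DescSortOf a b) :
    b = a := by
  obtain ⟨⟨σ, hσ⟩, hb⟩ := h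
  have hperm : List.Perm (List.ofFn b) (List.ofFn a) := by
    have : b = a ∘ σ := funext hσ
    rw [this]
    exact σ.ofFn_comp_perm a
  have hs : ∀ (f : Fin n → ℝ), DescSorted f → (List.ofFn f).Pairwise (· ≥ ·) := by
    intro f hf
    rw [List.pairwise_ofFn]
    intro i j hij
    exact hf i j hij.le
  have := List.Perm.eq_of_pairwise (fun _ _ _ _ h1 h2 => le_antisymm h2 h1) (hs b hb) (hs a ha) hperm
  rwa [List.ofFn_inj] at this

lemma perturb {n : ℕ} {x u : Fin n → ℝ} (hu : IsIsoProj x u) (d : Fin n → ℝ) (ε : ℝ)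
    (hd : DescSorted (fun i => u i + ε * d i)) :
    0 ≤ ε ^ 2 * ∑ i, d i ^ 2 - 2 * ε * ∑ i, (x i - u i) * d i := by
  have h := hu.2 _ hd
  have expand : ∑ i, (x i - (u i + ε * d i)) ^ 2
      = ∑ i, (x i - u i) ^ 2 - 2 * ε * ∑ i, (x i - u i) * d i + ε ^ 2 * ∑ i, d i ^ 2 := by
    rw [Finset.mul_sum, Finset.mul_sum, ← Finset.sum_sub_distrib, ← Finset.sum_add_distrib]
    exact Finset.sum_congr rfl fun i _ => by ring
  rw [expand] at h
  linarith

-- indicator sums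
lemma sum_ind_sq {n : ℕ} (k : ℕ) :
    ∑ i : Fin n, (if (i : ℕ) < k then (1:ℝ) else 0) ^ 2
      = (Finset.univ.filter (fun i : Fin n => (i : ℕ) < k)).card := by
  rw [Finset.card_eq_sum_ones, Nat.cast_sum]
  push_cast
  rw [Finset.sum_filter]
  exact Finset.sum_congr rfl fun i _ => by split <;> simp

lemma sum_mul_ind {n : ℕ} (f : Fin n → ℝ) (k : ℕ) :
    ∑ i : Fin n, f i * (if (i : ℕ) < k then (1:ℝ) else 0)
      = ∑ i ∈ Finset.univ.filter (fun i : Fin n => (i : ℕ) < k), f i := by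
  rw [Finset.sum_filter]
  exact Finset.sum_congr rfl fun i _ => by split <;> simp

lemma desc_add_ind {n : ℕ} {u : Fin n → ℝ} (hu : DescSorted u) {k : ℕ} {ε : ℝ} (hε : 0 ≤ ε) :
    DescSorted (fun i => u i + ε * (if (i : ℕ) < k then 1 else 0)) := by
  intro i j hij
  have hij' : (i : ℕ) ≤ (j : ℕ) := hij
  have h := hu i j hij
  dsimp only
  by_cases hj : (j : ℕ) < k
  · have hi : (i : ℕ) < k := lt_of_le_of_lt hij' hj
    rw [if_pos hi, if_pos hj]; linarith
  · by_cases hi : (i : ℕ) < k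
    · rw [if_pos hi, if_neg hj]; linarith
    · rw [if_neg hi, if_neg hj]; linarith

lemma desc_add_ind_neg {n : ℕ} {u : Fin n → ℝ} (hu : DescSorted u) {k : ℕ} (hk0 : 0 < k)
    (hkn : k < n) {ε : ℝ} (hε : ε ≤ 0)
    (hgap : u ⟨k, hkn⟩ - u ⟨k - 1, by omega⟩ ≤ ε) :
    DescSorted (fun i => u i + ε * (if (i : ℕ) < k then 1 else 0)) := by
  intro i j hij
  have hij' : (i : ℕ) ≤ (j : ℕ) := hij
  have h := hu i j hij
  dsimp only
  by_cases hi : (i : ℕ) < k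
  · by_cases hj : (j : ℕ) < k
    · rw [if_pos hi, if_pos hj]; linarith
    · have h1 : u j ≤ u ⟨k, hkn⟩ := hu ⟨k, hkn⟩ j (by simp [Fin.le_def]; omega)
      have h2 : u ⟨k - 1, by omega⟩ ≤ u i := hu i ⟨k - 1, by omega⟩ (by simp [Fin.le_def]; omega)
      rw [if_pos hi, if_neg hj]; linarith
  · have hj : ¬ (j : ℕ) < k := fun hh => hi (lt_of_le_of_lt hij' hh)
    rw [if_neg hi, if_neg hj]; linarith

lemma proj_psum {n : ℕ} {x u : Fin n → ℝ} (hu : IsIsoProj x u) (k : ℕ) :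
    psum x k ≤ psum u k := by
  by_contra hcon
  push_neg at hcon
  set F := Finset.univ.filter (fun i : Fin n => (i : ℕ) < k) with hF
  set t : ℝ := psum x k - psum u k with ht
  have hsum : ∑ i, (x i - u i) * (if (i : ℕ) < k then (1:ℝ) else 0) = t := by
    rw [sum_mul_ind (fun i => x i - u i) k, Finset.sum_sub_distrib]; rfl
  have htpos : 0 < t := by simp only [ht]; linarith
  have hFne : F.Nonempty := by
    by_contra hemp
    rw [Finset.not_nonempty_iff_eq_empty] at hemp
    have : t = 0 := by simp [ht, psum, ← hF, hemp]
    linarith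
  set K : ℝ := (F.card : ℝ) with hK
  have hK0 : (0:ℝ) < K := by rw [hK]; exact_mod_cast Finset.card_pos.2 hFne
  have hp := perturb hu (fun i => if (i : ℕ) < k then 1 else 0) (t / K)
    (desc_add_ind hu.1 (by positivity))
  rw [sum_ind_sq, hsum] at hp
  have e2 : (t / K) ^ 2 * K = (t / K) * t := by field_simp
  rw [e2] at hp
  have h2 : 0 < t / K := div_pos htpos hK0
  nlinarith [mul_pos h2 htpos]

lemma proj_total {n : ℕ} {x u : Fin n → ℝ} (hu : IsIsoProj x u) :
    ∑ i, u i = ∑ i, x i := by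
  rcases Nat.eq_zero_or_pos n with hn | hn
  · subst hn; simp
  suffices h : ∑ i, (x i - u i) = 0 by
    rw [Finset.sum_sub_distrib] at h; linarith
  set s : ℝ := ∑ i, (x i - u i) with hs
  have hn' : (0:ℝ) < n := by exact_mod_cast hn
  have hp : ∀ ε : ℝ, 0 ≤ ε ^ 2 * n - 2 * ε * s := by
    intro ε
    have hd : DescSorted (fun i : Fin n => u i + ε * 1) := by
      intro i j hij; dsimp; linarith [hu.1 i j hij]
    have h0 := perturb hu (fun _ => 1) ε hd
    have e1 : ∑ _i : Fin n, ((1:ℝ)) ^ 2 = (n:ℝ) := by simp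
    have e2 : ∑ i, (x i - u i) * (1:ℝ) = s := by simp only [mul_one]; rfl
    rw [e1, e2] at h0
    exact h0
  by_contra hne
  have hsq : 0 < s ^ 2 := by positivity
  have h1 := hp (s / n)
  have e2 : (s / n) ^ 2 * (n:ℝ) = s ^ 2 / n := by field_simp
  have e3 : 2 * (s / n) * s = 2 * (s ^ 2 / n) := by ring
  rw [e2, e3] at h1
  have : 0 < s ^ 2 / n := div_pos hsq hn'
  linarith

lemma proj_psum_eq {n : ℕ} {x u : Fin n → ℝ} (hu : IsIsoProj x u) {k : ℕ} (hk0 : 0 < k)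
    (hkn : k < n) (hdrop : u ⟨k, hkn⟩ < u ⟨k - 1, by omega⟩) :
    psum u k = psum x k := by
  have h1 := proj_psum hu k
  rcases le_or_gt (psum u k) (psum x k) with h | h
  · linarith
  exfalso
  set t : ℝ := psum x k - psum u k with ht
  have htneg : t < 0 := by simp only [ht]; linarith
  set F := Finset.univ.filter (fun i : Fin n => (i : ℕ) < k) with hF
  have hsum : ∑ i, (x i - u i) * (if (i : ℕ) < k then (1:ℝ) else 0) = t := by
    rw [sum_mul_ind (fun i => x i - u i) k, Finset.sum_sub_distrib]; rfl
  have hFne : F.Nonempty := ⟨⟨0, by omega⟩, by simp [hF, hk0]⟩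
  set K : ℝ := (F.card : ℝ) with hK
  have hK0 : (0:ℝ) < K := by rw [hK]; exact_mod_cast Finset.card_pos.2 hFne
  set g : ℝ := u ⟨k, hkn⟩ - u ⟨k - 1, by omega⟩ with hg
  have hgneg : g < 0 := by simp only [hg]; linarith
  set ε : ℝ := max g (t / K) with hε
  have hεneg : ε < 0 := max_lt hgneg (div_neg_of_neg_of_pos htneg hK0)
  have hεg : g ≤ ε := le_max_left _ _
  have hεt : t / K ≤ ε := le_max_right _ _
  have hp := perturb hu (fun i => if (i : ℕ) < k then 1 else 0) ε
    (desc_add_ind_neg hu.1 hk0 hkn hεneg.le hεg)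
  rw [sum_ind_sq, hsum] at hp
  have ha : ε * ε ≤ (t / K) * ε := mul_le_mul_of_nonpos_right hεt hεneg.le
  have hb : (t / K) * ε * K = t * ε := by field_simp
  have hc : ε ^ 2 * K ≤ t * ε := by nlinarith
  have hd : 0 < t * ε := mul_pos_of_neg_of_neg htneg hεneg
  nlinarith

lemma psum_zero {n : ℕ} (a : Fin n → ℝ) : psum a 0 = 0 := by simp [psum]

lemma psum_univ {n : ℕ} (a : Fin n → ℝ) {k : ℕ} (hk : n ≤ k) : psum a k = ∑ i, a i := by
  unfold psum
  rw [Finset.filter_true_of_mem fun i _ => lt_of_lt_of_le i.isLt hk]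

lemma psum_succ {n : ℕ} (a : Fin n → ℝ) {k : ℕ} (hk : k < n) :
    psum a (k + 1) = psum a k + a ⟨k, hk⟩ := by
  unfold psum
  have : Finset.univ.filter (fun i : Fin n => (i : ℕ) < k + 1)
      = insert ⟨k, hk⟩ (Finset.univ.filter (fun i : Fin n => (i : ℕ) < k)) := by
    ext i
    simp only [Finset.mem_filter, Finset.mem_insert, Finset.mem_univ, true_and, Fin.ext_iff]
    omega
  rw [this, Finset.sum_insert (by simp)]
  ring

lemma psum_block_le {n : ℕ} {a : Fin n → ℝ} {i : ℕ} {c : ℝ} :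
    ∀ k, i ≤ k → k ≤ n → (∀ t (ht : t < n), i ≤ t → t < k → c ≤ a ⟨t, ht⟩) →
      psum a i + ((k : ℝ) - i) * c ≤ psum a k := by
  intro k
  induction k with
  | zero =>
    intro hik _ _
    have : i = 0 := Nat.le_zero.mp hik
    subst this; norm_num
  | succ k ih =>
    intro hik hkn hc
    rcases eq_or_lt_of_le hik with he | hlt
    · rw [← he]; norm_num
    have hik' : i ≤ k := by omega
    have hkn' : k < n := by omega
    have h1 := ih hik' hkn'.le (fun t ht h1 h2 => hc t ht h1 (by omega))
    have h2 : c ≤ a ⟨k, hkn'⟩ := hc k hkn' hik' (by omega)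
    rw [psum_succ a hkn']
    push_cast
    linarith

lemma psum_block_ge {n : ℕ} {a : Fin n → ℝ} {i : ℕ} {c : ℝ} :
    ∀ k, i ≤ k → k ≤ n → (∀ t (ht : t < n), i ≤ t → t < k → a ⟨t, ht⟩ ≤ c) →
      psum a k ≤ psum a i + ((k : ℝ) - i) * c := by
  intro k
  induction k with
  | zero =>
    intro hik _ _
    have : i = 0 := Nat.le_zero.mp hik
    subst this; norm_num
  | succ k ih =>
    intro hik hkn hc
    rcases eq_or_lt_of_le hik with he | hlt
    · rw [← he]; norm_num
    have hik' : i ≤ k := by omega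
    have hkn' : k < n := by omega
    have h1 := ih hik' hkn'.le (fun t ht h1 h2 => hc t ht h1 (by omega))
    have h2 : a ⟨k, hkn'⟩ ≤ c := hc k hkn' hik' (by omega)
    rw [psum_succ a hkn']
    push_cast
    linarith

lemma chord {n : ℕ} {u : Fin n → ℝ} (hu : DescSorted u) {i k j : ℕ} (hik : i ≤ k)
    (hkj : k ≤ j) (hjn : j ≤ n) :
    ((j : ℝ) - k) * psum u i + ((k : ℝ) - i) * psum u j ≤ ((j : ℝ) - i) * psum u k := by
  rcases eq_or_lt_of_le hik with hei | hi
  · subst hei; norm_num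
  rcases eq_or_lt_of_le hkj with hej | hj
  · subst hej; norm_num
  have hkn : k - 1 < n := by omega
  set c : ℝ := u ⟨k - 1, hkn⟩ with hc
  have h1 : psum u i + ((k : ℝ) - i) * c ≤ psum u k := by
    apply psum_block_le k hik (by omega)
    intro t ht _ h2
    exact hu ⟨t, ht⟩ ⟨k - 1, hkn⟩ (by simp [Fin.le_def]; omega)
  have h2 : psum u j ≤ psum u k + ((j : ℝ) - k) * c := by
    have := psum_block_ge (a := u) (i := k) (c := c) j hkj hjn
      (fun t ht h1' h2' => hu ⟨k - 1, hkn⟩ ⟨t, ht⟩ (by simp [Fin.le_def]; omega))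
    push_cast at this ⊢
    linarith
  have hjk : (0:ℝ) ≤ (j : ℝ) - k := by
    have : (k:ℝ) ≤ j := by exact_mod_cast hkj
    linarith
  have hki : (0:ℝ) ≤ (k : ℝ) - i := by
    have : (i:ℝ) ≤ k := by exact_mod_cast hik
    linarith
  nlinarith [mul_le_mul_of_nonneg_left h1 hjk, mul_le_mul_of_nonneg_left h2 hki]

lemma psum_perm_le {n : ℕ} {R : Fin n → ℝ} (hR : DescSorted R) (π : Equiv.Perm (Fin n))
    {k : ℕ} (hk : k ≤ n) : psum (fun i => R (π i)) k ≤ psum R k := by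
  rcases eq_or_lt_of_le hk with he | hkn
  · subst he
    rw [psum_univ _ le_rfl, psum_univ _ le_rfl]
    exact le_of_eq (Equiv.sum_comp π R)
  set F := Finset.univ.filter (fun i : Fin n => (i : ℕ) < k) with hF
  set T := F.image π with hT
  have hcard : T.card = F.card := Finset.card_image_of_injective F π.injective
  have hl : psum (fun i => R (π i)) k = ∑ j ∈ T, R j := by
    rw [hT, Finset.sum_image (fun a _ b _ h => π.injective h)]
    rfl
  rw [hl]
  show ∑ j ∈ T, R j ≤ psum R k
  have e1 : ∑ j ∈ T ∩ F, R j + ∑ j ∈ T \ F, R j = ∑ j ∈ T, R j :=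
    Finset.sum_inter_add_sum_sdiff T F R
  have e2 : ∑ j ∈ F ∩ T, R j + ∑ j ∈ F \ T, R j = ∑ j ∈ F, R j :=
    Finset.sum_inter_add_sum_sdiff F T R
  have ecard : (T \ F).card = (F \ T).card := by
    have c1 : (T \ F).card + (T ∩ F).card = T.card := Finset.card_sdiff_add_card_inter T F
    have c2 : (F \ T).card + (F ∩ T).card = F.card := Finset.card_sdiff_add_card_inter F T
    rw [Finset.inter_comm] at c1
    omega
  set p : Fin n := ⟨k, hkn⟩ with hp
  have hA : ∑ j ∈ T \ F, R j ≤ (T \ F).card • R p := by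
    apply Finset.sum_le_card_nsmul
    intro a ha
    rw [Finset.mem_sdiff] at ha
    have ha2 : ¬ (a : ℕ) < k := by
      intro h
      exact ha.2 (by rw [hF, Finset.mem_filter]; exact ⟨Finset.mem_univ a, h⟩)
    have hpv : (p : ℕ) = k := rfl
    exact hR p a (by rw [Fin.le_def, hpv]; omega)
  have hB : (F \ T).card • R p ≤ ∑ j ∈ F \ T, R j := by
    apply Finset.card_nsmul_le_sum
    intro b hb
    rw [Finset.mem_sdiff, hF, Finset.mem_filter] at hb
    have hb1 : (b : ℕ) < k := hb.1.2
    have hpv : (p : ℕ) = k := rfl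
    exact hR b p (by rw [Fin.le_def, hpv]; omega)
  rw [ecard] at hA
  have : psum R k = ∑ j ∈ F, R j := rfl
  rw [this]
  have hinter : ∑ j ∈ T ∩ F, R j = ∑ j ∈ F ∩ T, R j := by rw [Finset.inter_comm]
  linarith

/-- for `R` sorted descending, any `z` and any permutation `π`, the
isotonic projection `(R + π∘z)⁺` majorizes `(π∘R + π∘z)⁺`. -/
theorem stmt14 {n : ℕ} (z R : Fin n → ℝ) (hR : DescSorted R)
    (π : Equiv.Perm (Fin n)) (u v : Fin n → ℝ)
    (hu : IsIsoProj (fun i => R i + z (π i)) u)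
    (hv : IsIsoProj (fun i => R (π i) + z (π i)) v) :
    Majorizes u v := by
  classical
  intro a' b' ha' hb'
  rw [descSortOf_eq hu.1 ha', descSortOf_eq hv.1 hb']
  set x : Fin n → ℝ := fun i => R i + z (π i) with hxd
  set y : Fin n → ℝ := fun i => R (π i) + z (π i) with hyd
  -- pointwise partial-sum comparison between x and y
  have hyx : ∀ t, t ≤ n → psum y t ≤ psum x t := by
    intro t ht
    have h1 : psum y t = psum (fun i => R (π i)) t + psum (fun i => z (π i)) t := by
      unfold psum; rw [← Finset.sum_add_distrib]
    have h2 : psum x t = psum R t + psum (fun i => z (π i)) t := by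
      unfold psum; rw [← Finset.sum_add_distrib]
    rw [h1, h2]
    linarith [psum_perm_le hR π ht]
  constructor
  · intro k hkn
    -- breakpoint predicate for v
    set P : ℕ → Prop := fun t => t = 0 ∨ t = n ∨
      ∃ h2 : t < n, 0 < t ∧ v ⟨t, h2⟩ < v ⟨t - 1, lt_of_le_of_lt (Nat.sub_le t 1) h2⟩ with hPd
    have hP0 : P 0 := Or.inl rfl
    have hPn : P n := Or.inr (Or.inl rfl)
    have hbp : ∀ t, P t → psum v t = psum y t := by
      intro t ht
      rcases ht with h0 | hn | ⟨h2, ht0, hdrop⟩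
      · subst h0; rw [psum_zero, psum_zero]
      · subst hn; rw [psum_univ _ le_rfl, psum_univ _ le_rfl]; exact proj_total hv
      · exact proj_psum_eq hv ht0 h2 hdrop
    have hub : ∀ t, P t → t ≤ n → psum v t ≤ psum u t := by
      intro t ht htn
      rw [hbp t ht]
      exact le_trans (hyx t htn) (proj_psum hu t)
    by_cases hPk : P k
    · exact hub k hPk hkn.le
    -- the block of v containing k
    set i := Nat.findGreatest P k with hi
    have hile : i ≤ k := Nat.findGreatest_le k
    have hPi : P i := Nat.findGreatest_spec (Nat.zero_le k) hP0
    have hno : ∀ t, i < t → t ≤ k → ¬ P t := fun t h1 h2 =>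
      Nat.findGreatest_is_greatest h1 h2
    have hex : ∃ m, P (k + m) := ⟨n - k, by rw [Nat.add_sub_cancel' hkn.le]; exact hPn⟩
    set j := k + Nat.find hex with hj
    have hPj : P j := Nat.find_spec hex
    have hjn : j ≤ n := by
      have h1 : Nat.find hex ≤ n - k := Nat.find_min' hex
        (by rw [Nat.add_sub_cancel' hkn.le]; exact hPn)
      omega
    have hnoj : ∀ t, k ≤ t → t < j → ¬ P t := by
      intro t h1 h2 hPt
      have := Nat.find_min hex (m := t - k) (by omega)
      rw [Nat.add_sub_cancel' h1] at this
      exact this hPt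
    have hik : i < k := lt_of_le_of_ne hile (fun h => hPk (h ▸ hPi))
    have hkj : k < j := by
      rcases Nat.eq_zero_or_pos (Nat.find hex) with h0 | h0
      · exfalso; apply hPk; have := hPj; rw [hj, h0, Nat.add_zero] at this; exact this
      · omega
    have hnobp : ∀ s, i < s → s < j → ¬ P s := by
      intro s h1 h2
      by_cases hs : s ≤ k
      · exact hno s h1 hs
      · exact hnoj s (by omega) h2
    have hin : i < n := by omega
    set c : ℝ := v ⟨i, hin⟩ with hc
    -- constancy of v on the block
    have hconst : ∀ t, i ≤ t → ∀ ht : t < n, t < j → v ⟨t, ht⟩ = c := by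
      intro t
      induction t with
      | zero => intro h0 ht _; have : i = 0 := Nat.le_zero.mp h0; simp [hc, this]
      | succ t ih =>
        intro h1 ht h2
        rcases eq_or_lt_of_le h1 with he | hlt
        · simp only [hc, ← he]
        have h1' : i ≤ t := by omega
        have ht' : t < n := by omega
        have h2' : t < j := by omega
        have h5 : ¬ v ⟨t + 1, ht⟩ < v ⟨t, ht'⟩ := by
          intro hh
          apply hnobp (t + 1) hlt h2
          rw [hPd]
          exact Or.inr (Or.inr ⟨ht, Nat.succ_pos t, hh⟩)
        have h6 : v ⟨t + 1, ht⟩ ≤ v ⟨t, ht'⟩ := hv.1 ⟨t, ht'⟩ ⟨t + 1, ht⟩ (by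
          simp only [Fin.mk_le_mk]; omega)
        rw [← ih h1' ht' h2']
        linarith [not_lt.mp h5, h6]
    -- block partial sums of v
    have hSk : psum v k = psum v i + ((k : ℝ) - i) * c := by
      have hle := psum_block_le (a := v) (i := i) (c := c) k hile hkn.le
        (fun t ht h1 h2 => (hconst t h1 ht (by omega)).ge)
      have hge := psum_block_ge (a := v) (i := i) (c := c) k hile hkn.le
        (fun t ht h1 h2 => (hconst t h1 ht (by omega)).le)
      linarith
    have hSj : psum v j = psum v i + ((j : ℝ) - i) * c := by
      have hle := psum_block_le (a := v) (i := i) (c := c) j (by omega) hjn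
        (fun t ht h1 h2 => (hconst t h1 ht h2).ge)
      have hge := psum_block_ge (a := v) (i := i) (c := c) j (by omega) hjn
        (fun t ht h1 h2 => (hconst t h1 ht h2).le)
      linarith
    -- chord inequality for u
    have hch := chord hu.1 hik.le hkj.le hjn
    have hAi : psum v i ≤ psum u i := hub i hPi (by omega)
    have hAj : psum v j ≤ psum u j := hub j hPj hjn
    -- assemble
    have hIK : (i : ℝ) < k := by exact_mod_cast hik
    have hKJ : (k : ℝ) < j := by exact_mod_cast hkj
    have key : ((j : ℝ) - i) * psum v k ≤ ((j : ℝ) - i) * psum u k := by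
      have e : ((j : ℝ) - i) * psum v k
          = ((j : ℝ) - k) * psum v i + ((k : ℝ) - i) * psum v j := by
        rw [hSk, hSj]; ring
      rw [e]
      have s1 : ((j : ℝ) - k) * psum v i ≤ ((j : ℝ) - k) * psum u i :=
        mul_le_mul_of_nonneg_left hAi (by linarith)
      have s2 : ((k : ℝ) - i) * psum v j ≤ ((k : ℝ) - i) * psum u j :=
        mul_le_mul_of_nonneg_left hAj (by linarith)
      linarith
    exact le_of_mul_le_mul_left key (by linarith)
  · -- total sums are equal
    rw [proj_total hu, proj_total hv]
    rw [hxd, hyd]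
    simp only [Finset.sum_add_distrib]
    rw [Equiv.sum_comp π R]
end

section
/- In the noiseless instance with items of true scores R_1=9, R_2=8, R_3=4, where owners 1,...,m−1 each own items {1,2} and owner m owns items {2,3}, with the averaging mechanism R̂_i = (∑_{j owns i} R̂_i^j)/|{j owns i}| and each R̂^j the isotonic-regression estimate under owner j's reported ranking: if owners 1,...,m−1 report truthfully and owner m's utility is ∑_{i∈{2,3}} max{R̂_i − 5, 0}, then for all m ≥ 3 owner m strictly prefers reporting the flipped ranking (item 3 above item 2) — obtaining utility (3 − 2/m) + 1 — over the truthful ranking, which yields utility 3. -/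
/-- noiseless instance with true scores `R₁ = 9, R₂ = 8, R₃ = 4`; owners
`1,...,m−1` own items `{1,2}` and report truthfully, owner `m` owns items `{2,3}`.
`(t₂, t₃)` is owner `m`'s isotonic-regression estimate under the flipped ranking
(item 3 above item 2) and `(s₂, s₃)` the estimate under the truthful ranking.
The averaging mechanism gives item 2 the score `((m−1)·8 + R̂₂^m)/m` and item 3 the score
`R̂₃^m`. With utility `∑_{i∈{2,3}} max{R̂_i − 5, 0}`, for all `m ≥ 3` the flipped report
yields utility `(3 − 2/m) + 1`, the truthful report yields `3`, and owner `m` strictly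
prefers the flipped report. -/
theorem stmt17 (m : ℕ) (hm : 3 ≤ m)
    (t₂ t₃ : ℝ)
    (ht_feas : t₂ ≤ t₃)
    (ht_opt : ∀ r₂ r₃ : ℝ, r₂ ≤ r₃ →
      (8 - t₂) ^ 2 + (4 - t₃) ^ 2 ≤ (8 - r₂) ^ 2 + (4 - r₃) ^ 2)
    (s₂ s₃ : ℝ)
    (hs_feas : s₃ ≤ s₂)
    (hs_opt : ∀ r₂ r₃ : ℝ, r₃ ≤ r₂ →
      (8 - s₂) ^ 2 + (4 - s₃) ^ 2 ≤ (8 - r₂) ^ 2 + (4 - r₃) ^ 2) :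
    max ((((m : ℝ) - 1) * 8 + t₂) / m - 5) 0 + max (t₃ - 5) 0 = (3 - 2 / m) + 1 ∧
    max ((((m : ℝ) - 1) * 8 + s₂) / m - 5) 0 + max (s₃ - 5) 0 = 3 ∧
    max ((((m : ℝ) - 1) * 8 + s₂) / m - 5) 0 + max (s₃ - 5) 0 <
      max ((((m : ℝ) - 1) * 8 + t₂) / m - 5) 0 + max (t₃ - 5) 0 := by
  have hm' : (3:ℝ) ≤ (m:ℝ) := by exact_mod_cast hm
  have hm0 : (0:ℝ) < (m:ℝ) := by linarith
  -- identify s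
  have hs := hs_opt 8 4 (by norm_num)
  have hs2 : s₂ = 8 := by nlinarith [sq_nonneg (8 - s₂), sq_nonneg (4 - s₃)]
  have hs3 : s₃ = 4 := by nlinarith [sq_nonneg (8 - s₂), sq_nonneg (4 - s₃)]
  -- identify t
  have ht := ht_opt 6 6 le_rfl
  have hkey : (t₂ - 6)^2 + (t₃ - 6)^2 + 4*(t₃ - t₂) ≤ 0 := by nlinarith
  have ht2 : t₂ = 6 := by nlinarith [sq_nonneg (t₂ - 6), sq_nonneg (t₃ - 6)]
  have ht3 : t₃ = 6 := by nlinarith [sq_nonneg (t₂ - 6), sq_nonneg (t₃ - 6)]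
  subst hs2 hs3 ht2 ht3
  have h2m : 2 / (m:ℝ) ≤ 2/3 := by
    rw [div_le_div_iff₀ hm0 (by norm_num)]; linarith
  have h2m' : 0 < 2 / (m:ℝ) := by positivity
  have hA : (((m : ℝ) - 1) * 8 + 6) / m - 5 = 3 - 2 / m := by
    field_simp; ring
  have hB : (((m : ℝ) - 1) * 8 + 8) / m - 5 = 3 := by
    field_simp; ring
  rw [hA, hB]
  rw [max_eq_left (by linarith), max_eq_left (by norm_num), max_eq_left (by norm_num),
    max_eq_right (by norm_num)]
  refine ⟨by ring, by ring, by linarith⟩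
end
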